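/- arXiv:1310.3235 — 8 statements merged into one kernel-verified Lean document; each statement's English description precedes it below -/
import Mathlib

section
/- Let n ≥ 1 be a natural number and let W : ℕ → ℕ satisfy W 0 = 1 and W i ≤ (2n).choose i for all 1 ≤ i ≤ n. Then the function f : ℝ → ℝ defined by f(p) = ∑_{i=0}^{n} (W i) · (p/2)^i · (1 − p/2)^{2n−i} is strictly antitone on the interval [0, 1/n]. -/
open Finset

private lemma term_hasDeriv (m i : ℕ) (c x : ℝ) :
    HasDerivAt (fun p : ℝ => c * (p / 2) ^ i * (1 - p / 2) ^ (m - i))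
      (c * ((i : ℝ) * (x / 2) ^ (i - 1) * (1 - x / 2) ^ (m - i)
        - ((m - i : ℕ) : ℝ) * (x / 2) ^ i * (1 - x / 2) ^ (m - i - 1)) / 2) x := by
  have h1 : HasDerivAt (fun p : ℝ => p / 2) (1 / 2) x := (hasDerivAt_id x).div_const 2
  have h2 : HasDerivAt (fun p : ℝ => (p / 2) ^ i)
      ((i : ℝ) * (x / 2) ^ (i - 1) * (1 / 2)) x := h1.pow i
  have h3 : HasDerivAt (fun p : ℝ => 1 - p / 2) (-(1 / 2)) x := h1.const_sub 1
  have h4 : HasDerivAt (fun p : ℝ => (1 - p / 2) ^ (m - i))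
      (((m - i : ℕ) : ℝ) * (1 - x / 2) ^ (m - i - 1) * (-(1 / 2))) x := h3.pow (m - i)
  have := (h2.const_mul c).mul h4
  exact this.congr_deriv (by ring)

private lemma key_sum_neg (n : ℕ) (hn : 1 ≤ n) (W : ℕ → ℕ) (hW0 : W 0 = 1)
    (hW : ∀ i, 1 ≤ i → i ≤ n → W i ≤ (2 * n).choose i) (q : ℝ)
    (hq0 : 0 < q) (hq1 : 2 * (n : ℝ) * q < 1) :
    ∑ i ∈ Finset.range (n + 1),
      (W i : ℝ) * ((i : ℝ) * q ^ (i - 1) * (1 - q) ^ (2 * n - i)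
        - ((2 * n - i : ℕ) : ℝ) * q ^ i * (1 - q) ^ (2 * n - i - 1)) < 0 := by
  have hn0 : (0:ℝ) < n := by exact_mod_cast hn
  have hqlt : q < 1 := by
    by_contra h
    push_neg at h
    have := mul_le_mul_of_nonneg_left h (show (0:ℝ) ≤ 2 * n by linarith)
    have hn1 : (1:ℝ) ≤ n := by exact_mod_cast hn
    simp at this
    linarith
  have hr : 0 < 1 - q := by linarith
  set g : ℕ → ℝ := fun i => (i : ℝ) * q ^ (i - 1) * (1 - q) ^ (2 * n - i)
        - ((2 * n - i : ℕ) : ℝ) * q ^ i * (1 - q) ^ (2 * n - i - 1) with hg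
  -- nonnegativity of g i for 1 ≤ i ≤ n
  have hgnn : ∀ i, 1 ≤ i → i ≤ n → 0 ≤ g i := by
    intro i h1 h2
    have hi2n : i ≤ 2 * n := by omega
    have hsplit1 : (1 - q) ^ (2 * n - i) = (1 - q) ^ (2 * n - i - 1) * (1 - q) := by
      rw [← pow_succ]
      congr 1
      omega
    have hsplit2 : q ^ i = q ^ (i - 1) * q := by
      rw [← pow_succ]
      congr 1
      omega
    have hcast : ((2 * n - i : ℕ) : ℝ) = 2 * n - i := by
      push_cast [hi2n]; ring
    have hgi : g i = q ^ (i - 1) * (1 - q) ^ (2 * n - i - 1) * ((i : ℝ) - 2 * n * q) := by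
      rw [hg]; dsimp only; rw [hsplit1, hsplit2, hcast]; ring
    rw [hgi]
    have h1' : (1:ℝ) ≤ i := by exact_mod_cast h1
    have : 0 ≤ (i : ℝ) - 2 * n * q := by linarith
    positivity
  -- bound by the binomial sum
  have hle : ∑ i ∈ Finset.range (n + 1), (W i : ℝ) * g i
      ≤ ∑ i ∈ Finset.range (n + 1), ((2 * n).choose i : ℝ) * g i := by
    apply Finset.sum_le_sum
    intro i hi
    rcases Nat.eq_zero_or_pos i with h0 | h0
    · subst h0; rw [hW0, Nat.choose_zero_right]
    · have hin : i ≤ n := by simpa using Nat.lt_succ_iff.mp (Finset.mem_range.mp hi)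
      have := hW i h0 hin
      exact mul_le_mul_of_nonneg_right (by exact_mod_cast this) (hgnn i h0 hin)
  -- telescoping evaluation of the binomial sum
  set f : ℕ → ℝ := fun j => (j : ℝ) * ((2 * n).choose j : ℝ) * q ^ (j - 1) * (1 - q) ^ (2 * n - j) with hf
  have hterm : ∀ i ∈ Finset.range (n + 1), ((2 * n).choose i : ℝ) * g i = f i - f (i + 1) := by
    intro i hi
    have hin : i ≤ n := Nat.lt_succ_iff.mp (Finset.mem_range.mp hi)
    have hid : ((2 * n).choose (i + 1) : ℝ) * (i + 1) = ((2 * n).choose i : ℝ) * ((2 * n - i : ℕ) : ℝ) := by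
      exact_mod_cast congrArg (Nat.cast (R := ℝ)) (Nat.choose_succ_right_eq (2 * n) i)
    have hexp : 2 * n - (i + 1) = 2 * n - i - 1 := by omega
    have hpow : q ^ ((i + 1) - 1) = q ^ i := by norm_num
    rw [hg, hf]
    dsimp only
    rw [hexp, hpow]
    push_cast
    linear_combination (q ^ i * (1 - q) ^ (2 * n - i - 1)) * hid
  have htel : ∑ i ∈ Finset.range (n + 1), ((2 * n).choose i : ℝ) * g i = f 0 - f (n + 1) := by
    rw [Finset.sum_congr rfl hterm, Finset.sum_range_sub']
  have hf0 : f 0 = 0 := by simp [hf]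
  have hfpos : 0 < f (n + 1) := by
    rw [hf]
    have h1 : 0 < ((2 * n).choose (n + 1) : ℝ) := by
      have : 0 < (2 * n).choose (n + 1) := Nat.choose_pos (by omega)
      exact_mod_cast this
    positivity
  calc ∑ i ∈ Finset.range (n + 1), (W i : ℝ) * g i
      ≤ ∑ i ∈ Finset.range (n + 1), ((2 * n).choose i : ℝ) * g i := hle
    _ = f 0 - f (n + 1) := htel
    _ < 0 := by rw [hf0]; linarith

/-- The weight-enumerator probability polynomial of the trivial logical class,
`f p = ∑_{i=0}^{n} W i * (p/2)^i * (1 - p/2)^(2n - i)`, is strictly decreasing on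
`[0, 1/n]`, whenever `W 0 = 1` and `W i ≤ (2n).choose i` for `1 ≤ i ≤ n`. -/
theorem trivial_class_prob_strictAntiOn (n : ℕ) (hn : 1 ≤ n) (W : ℕ → ℕ)
    (hW0 : W 0 = 1) (hW : ∀ i, 1 ≤ i → i ≤ n → W i ≤ (2 * n).choose i) :
    StrictAntiOn
      (fun p : ℝ => ∑ i ∈ Finset.range (n + 1),
        (W i : ℝ) * (p / 2) ^ i * (1 - p / 2) ^ (2 * n - i))
      (Set.Icc 0 (1 / (n : ℝ))) := by
  have hn0 : (0:ℝ) < n := by exact_mod_cast hn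
  apply strictAntiOn_of_deriv_neg (convex_Icc _ _)
  · apply Continuous.continuousOn
    fun_prop
  · intro x hx
    rw [interior_Icc, Set.mem_Ioo] at hx
    have hd : HasDerivAt
        (fun p : ℝ => ∑ i ∈ Finset.range (n + 1),
          (W i : ℝ) * (p / 2) ^ i * (1 - p / 2) ^ (2 * n - i))
        (∑ i ∈ Finset.range (n + 1),
          (W i : ℝ) * ((i : ℝ) * (x / 2) ^ (i - 1) * (1 - x / 2) ^ (2 * n - i)
            - ((2 * n - i : ℕ) : ℝ) * (x / 2) ^ i * (1 - x / 2) ^ (2 * n - i - 1)) / 2) x :=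
      HasDerivAt.fun_sum fun i _ => term_hasDeriv (2 * n) i (W i : ℝ) x
    rw [hd.deriv, ← Finset.sum_div]
    apply div_neg_of_neg_of_pos _ (by norm_num)
    apply key_sum_neg n hn W hW0 hW (x / 2) (by linarith [hx.1])
    have : x * n < 1 := (lt_div_iff₀ hn0).mp hx.2
    nlinarith
end

section
/- Let n ≥ 1 be a natural number, let p be a real number with 0 < p ≤ 1/n, and let W : ℕ → ℕ satisfy W i ≤ (2n).choose i for all 1 ≤ i ≤ n. Then ∑_{i=1}^{n} (W i) · (p/2)^i · (1 − p/2)^{2n−i} · (i − n·p)/(p·(1 − p/2)) < n · (1 − p/2)^{2n−1}. -/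
open Finset

private lemma bern_sum (m : ℕ) (x : ℝ) :
    ∑ i ∈ Finset.range (m + 1), (m.choose i : ℝ) * x ^ i * (1 - x) ^ (m - i) = 1 := by
  have h := congrArg (Polynomial.eval x) (bernsteinPolynomial.sum ℝ m)
  simpa [bernsteinPolynomial, Polynomial.eval_finset_sum] using h

private lemma bern_sum_smul (m : ℕ) (x : ℝ) :
    ∑ i ∈ Finset.range (m + 1), (i : ℝ) * ((m.choose i : ℝ) * x ^ i * (1 - x) ^ (m - i))
      = m * x := by
  have h := congrArg (Polynomial.eval x) (bernsteinPolynomial.sum_smul ℝ m)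
  simpa [bernsteinPolynomial, Polynomial.eval_finset_sum, mul_comm, mul_assoc, mul_left_comm]
    using h

private lemma bern_key (m : ℕ) (x : ℝ) :
    ∑ i ∈ Finset.Icc 1 m, (m.choose i : ℝ) * x ^ i * (1 - x) ^ (m - i) * ((i : ℝ) - m * x)
      = m * x * (1 - x) ^ m := by
  have hins : Finset.range (m + 1) = insert 0 (Finset.Icc 1 m) := by
    ext i; simp [Finset.mem_range, Finset.mem_insert, Finset.mem_Icc]; omega
  have h0 : ∑ i ∈ Finset.range (m + 1),
      (m.choose i : ℝ) * x ^ i * (1 - x) ^ (m - i) * ((i : ℝ) - m * x) = 0 := by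
    have : ∑ i ∈ Finset.range (m + 1),
        (m.choose i : ℝ) * x ^ i * (1 - x) ^ (m - i) * ((i : ℝ) - m * x)
        = (∑ i ∈ Finset.range (m + 1),
            (i : ℝ) * ((m.choose i : ℝ) * x ^ i * (1 - x) ^ (m - i)))
          - (m * x) * ∑ i ∈ Finset.range (m + 1),
            (m.choose i : ℝ) * x ^ i * (1 - x) ^ (m - i) := by
      rw [Finset.mul_sum, ← Finset.sum_sub_distrib]
      exact Finset.sum_congr rfl fun i _ => by ring
    rw [this, bern_sum, bern_sum_smul]; ring
  rw [hins, Finset.sum_insert (by simp)] at h0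
  simp at h0
  linarith

/-- For `0 < p ≤ 1/n` and weight-enumerator coefficients `W i ≤ (2n).choose i`,
the derivative-related sum `∑_{i=1}^{n} W i * (p/2)^i * (1-p/2)^(2n-i) * (i - n p)/(p (1-p/2))`
is strictly smaller than `n * (1 - p/2)^(2n - 1)`. -/
theorem derivative_sum_lt (n : ℕ) (hn : 1 ≤ n) (p : ℝ) (hp : 0 < p)
    (hpn : p ≤ 1 / (n : ℝ)) (W : ℕ → ℕ)
    (hW : ∀ i, 1 ≤ i → i ≤ n → W i ≤ (2 * n).choose i) :
    ∑ i ∈ Finset.Icc 1 n,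
        (W i : ℝ) * (p / 2) ^ i * (1 - p / 2) ^ (2 * n - i) *
          (((i : ℝ) - n * p) / (p * (1 - p / 2)))
      < (n : ℝ) * (1 - p / 2) ^ (2 * n - 1) := by
  set m := 2 * n with hm
  set x : ℝ := p / 2 with hx
  have hn1 : (1 : ℝ) ≤ (n : ℝ) := by exact_mod_cast hn
  have hn0 : (0 : ℝ) < (n : ℝ) := by linarith
  have hp1 : p ≤ 1 := hpn.trans (by rw [div_le_one hn0]; exact hn1)
  have hx0 : 0 < x := by positivity
  have hx1 : x ≤ 1 / 2 := by simp only [hx]; linarith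
  have hy0 : (0 : ℝ) < 1 - x := by linarith
  have hD : (0 : ℝ) < p * (1 - p / 2) := by
    have : (1 : ℝ) - p / 2 = 1 - x := rfl
    rw [this]; positivity
  have hnp : (n : ℝ) * p ≤ 1 := by
    calc (n : ℝ) * p ≤ (n : ℝ) * (1 / n) := by
          exact mul_le_mul_of_nonneg_left hpn (le_of_lt hn0)
      _ = 1 := by field_simp
  have hmx : (m : ℝ) * x = (n : ℝ) * p := by
    push_cast [hm, hx]; ring
  -- each summand bounded by the binomial version
  have step1 : ∑ i ∈ Finset.Icc 1 n,
        (W i : ℝ) * x ^ i * (1 - x) ^ (m - i) * (((i : ℝ) - n * p) / (p * (1 - p / 2)))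
      ≤ ∑ i ∈ Finset.Icc 1 n,
        (m.choose i : ℝ) * x ^ i * (1 - x) ^ (m - i) *
          (((i : ℝ) - n * p) / (p * (1 - p / 2))) := by
    apply Finset.sum_le_sum
    intro i hi
    rw [Finset.mem_Icc] at hi
    have hWi : (W i : ℝ) ≤ (m.choose i : ℝ) := by
      exact_mod_cast hW i hi.1 hi.2
    have hi1 : (1 : ℝ) ≤ (i : ℝ) := by exact_mod_cast hi.1
    have hfac : 0 ≤ ((i : ℝ) - n * p) / (p * (1 - p / 2)) := by
      apply div_nonneg _ (le_of_lt hD); linarith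
    have hpow : 0 ≤ x ^ i * (1 - x) ^ (m - i) := by positivity
    nlinarith [mul_le_mul_of_nonneg_right hWi (mul_nonneg hpow hfac)]
  -- extend the sum to Icc 1 m, strictly
  have step2 : ∑ i ∈ Finset.Icc 1 n,
        (m.choose i : ℝ) * x ^ i * (1 - x) ^ (m - i) *
          (((i : ℝ) - n * p) / (p * (1 - p / 2)))
      < ∑ i ∈ Finset.Icc 1 m,
        (m.choose i : ℝ) * x ^ i * (1 - x) ^ (m - i) *
          (((i : ℝ) - n * p) / (p * (1 - p / 2))) := by
    apply Finset.sum_lt_sum_of_subset (i := m)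
    · intro i hi
      rw [Finset.mem_Icc] at hi ⊢
      exact ⟨hi.1, hi.2.trans (by omega)⟩
    · rw [Finset.mem_Icc]; omega
    · rw [Finset.mem_Icc]; omega
    · have hmn : (n : ℝ) < (m : ℝ) := by
        have : n < m := by omega
        exact_mod_cast this
      have hfac : 0 < ((m : ℝ) - n * p) / (p * (1 - p / 2)) := by
        apply div_pos _ hD; linarith
      simp only [Nat.choose_self, Nat.cast_one, one_mul]
      exact mul_pos (by positivity) hfac
    · intro j hj hjn
      rw [Finset.mem_Icc] at hj
      have hj1 : (1 : ℝ) ≤ (j : ℝ) := by exact_mod_cast hj.1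
      have hfac : 0 ≤ ((j : ℝ) - n * p) / (p * (1 - p / 2)) := by
        apply div_nonneg _ (le_of_lt hD); linarith
      positivity
  -- evaluate the full sum
  have step3 : ∑ i ∈ Finset.Icc 1 m,
        (m.choose i : ℝ) * x ^ i * (1 - x) ^ (m - i) *
          (((i : ℝ) - n * p) / (p * (1 - p / 2)))
      = (n : ℝ) * (1 - x) ^ (m - 1) := by
    have hkey := bern_key m x
    have hrw : ∑ i ∈ Finset.Icc 1 m,
        (m.choose i : ℝ) * x ^ i * (1 - x) ^ (m - i) *
          (((i : ℝ) - n * p) / (p * (1 - p / 2)))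
        = (∑ i ∈ Finset.Icc 1 m,
            (m.choose i : ℝ) * x ^ i * (1 - x) ^ (m - i) * ((i : ℝ) - m * x))
          / (p * (1 - p / 2)) := by
      rw [Finset.sum_div]
      refine Finset.sum_congr rfl fun i _ => ?_
      rw [hmx]; ring
    rw [hrw, hkey]
    have hpden : p * (1 - p / 2) = 2 * x * (1 - x) := by
      simp only [hx]; ring
    have hm1 : (1 - x) ^ m = (1 - x) ^ (m - 1) * (1 - x) := by
      rw [← pow_succ]
      congr 1; omega
    rw [hpden, hm1]
    have hmr : (m : ℝ) = 2 * n := by push_cast [hm]; ring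
    rw [hmr]
    field_simp
  calc ∑ i ∈ Finset.Icc 1 n,
        (W i : ℝ) * x ^ i * (1 - x) ^ (m - i) * (((i : ℝ) - n * p) / (p * (1 - p / 2)))
      ≤ _ := step1
    _ < _ := step2
    _ = (n : ℝ) * (1 - x) ^ (m - 1) := step3
end

section
/- Let n ≥ 1 be a natural number and let B : ℕ → ℕ satisfy B 0 = 0. Then the function g : ℝ → ℝ defined by g(p) = ∑_{i=0}^{n} (B i) · (p/2)^i · (1 − p/2)^{2n−i} is monotone nondecreasing on the interval [0, 1/n]. -/
lemma aux_mono (n i : ℕ) (hn : 1 ≤ n) (hi1 : 1 ≤ i) (hin : i ≤ n) :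
    MonotoneOn (fun p : ℝ => (p / 2) ^ i * (1 - p / 2) ^ (2 * n - i))
      (Set.Icc 0 (1 / (n : ℝ))) := by
  have hnpos : (0:ℝ) < n := by exact_mod_cast hn
  set m := 2 * n - i with hm
  have him : i + m = 2 * n := by omega
  have hm1 : 1 ≤ m := by omega
  apply monotoneOn_of_deriv_nonneg (convex_Icc _ _)
  · fun_prop
  · rw [interior_Icc]; fun_prop
  · intro p hp
    rw [interior_Icc] at hp
    have hp0 : 0 < p := hp.1
    have hp1 : p < 1 / n := hp.2
    have hnp : (n:ℝ) * p < 1 := by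
      rw [lt_div_iff₀ hnpos] at hp1
      linarith
    have hn1 : (1:ℝ) ≤ n := by exact_mod_cast hn
    have hple : p < 1 := by nlinarith
    have hp2 : (0:ℝ) < 1 - p / 2 := by linarith
    have h1 : HasDerivAt (fun p : ℝ => (p / 2) ^ i)
        ((i : ℝ) * (p / 2) ^ (i - 1) * (1 / 2)) p := by
      have := ((hasDerivAt_id p).div_const 2).pow i
      simpa [Pi.pow_def] using this
    have h2 : HasDerivAt (fun p : ℝ => (1 - p / 2) ^ m)
        ((m : ℝ) * (1 - p / 2) ^ (m - 1) * (-(1 / 2))) p := by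
      have hb : HasDerivAt (fun p : ℝ => 1 - p / 2) (-(1 / 2)) p := by
        simpa using ((hasDerivAt_id p).div_const 2).const_sub 1
      simpa [Pi.pow_def] using hb.pow m
    have H : HasDerivAt (fun p : ℝ => (p / 2) ^ i * (1 - p / 2) ^ m)
        ((i : ℝ) * (p / 2) ^ (i - 1) * (1 / 2) * (1 - p / 2) ^ m
          + (p / 2) ^ i * ((m : ℝ) * (1 - p / 2) ^ (m - 1) * (-(1 / 2)))) p :=
      h1.mul h2
    rw [H.deriv]
    have hpi : (p / 2) ^ i = (p / 2) ^ (i - 1) * (p / 2) := by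
      rw [← pow_succ]; congr 1; omega
    have hpm : (1 - p / 2) ^ m = (1 - p / 2) ^ (m - 1) * (1 - p / 2) := by
      rw [← pow_succ]; congr 1; omega
    rw [hpi, hpm]
    have heq : (i : ℝ) * (p / 2) ^ (i - 1) * (1 / 2) * ((1 - p / 2) ^ (m - 1) * (1 - p / 2))
          + (p / 2) ^ (i - 1) * (p / 2) * ((m : ℝ) * (1 - p / 2) ^ (m - 1) * (-(1 / 2)))
        = (p / 2) ^ (i - 1) * (1 - p / 2) ^ (m - 1) * (1 / 2)
            * ((i : ℝ) - ((i : ℝ) + (m : ℝ)) * (p / 2)) := by ring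
    rw [heq]
    have him' : (i : ℝ) + (m : ℝ) = 2 * n := by exact_mod_cast him
    rw [him']
    have hi1' : (1:ℝ) ≤ i := by exact_mod_cast hi1
    have : (0:ℝ) ≤ (i : ℝ) - 2 * n * (p / 2) := by nlinarith
    positivity

/-- The weight-enumerator probability polynomial of a nontrivial coset
(`B 0 = 0`), `g p = ∑_{i=0}^{n} B i * (p/2)^i * (1 - p/2)^(2n - i)`, is
monotone nondecreasing on `[0, 1/n]`. -/
theorem nontrivial_class_prob_monotoneOn (n : ℕ) (hn : 1 ≤ n) (B : ℕ → ℕ)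
    (hB0 : B 0 = 0) :
    MonotoneOn
      (fun p : ℝ => ∑ i ∈ Finset.range (n + 1),
        (B i : ℝ) * (p / 2) ^ i * (1 - p / 2) ^ (2 * n - i))
      (Set.Icc 0 (1 / (n : ℝ))) := by
  intro p hp q hq hpq
  apply Finset.sum_le_sum
  intro i hi
  rcases Nat.eq_zero_or_pos i with rfl | hi1
  · simp [hB0]
  · rw [Finset.mem_range] at hi
    have hin : i ≤ n := by omega
    rw [mul_assoc, mul_assoc]
    apply mul_le_mul_of_nonneg_left _ (by positivity)
    exact aux_mono n i hn hi1 hin hp hq hpq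
end

section
/- Let n ≥ 1 be a natural number, let W : ℕ → ℕ satisfy W 0 = 1 and W i ≤ (2n).choose i for all 1 ≤ i ≤ n, and let B : ℕ → ℕ satisfy B 0 = 0 and B i ≥ 1 for at least one i with 1 ≤ i ≤ n. Define f(p) = ∑_{i=0}^{n} (W i)(p/2)^i(1−p/2)^{2n−i} and g(p) = ∑_{i=0}^{n} (B i)(p/2)^i(1−p/2)^{2n−i}. Then the ratio p ↦ g(p)/f(p) is strictly monotone increasing on the half-open interval (0, 1/n]; consequently, for every real v > 0 there is at most one p ∈ (0, 1/n] with g(p) = v · f(p). -/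
open Finset

namespace CrossingAux


lemma sum_choose_pow (m : ℕ) (x : ℝ) :
    ∑ i ∈ range (m + 1), (m.choose i : ℝ) * x ^ i = (1 + x) ^ m := by
  rw [add_comm 1 x, add_pow]
  simp [mul_comm]

lemma sum_mul_choose_pow (m : ℕ) (x : ℝ) :
    ∑ i ∈ range (m + 1 + 1), (i : ℝ) * ((m + 1).choose i : ℝ) * x ^ i
      = (m + 1 : ℝ) * x * (1 + x) ^ m := by
  rw [Finset.sum_range_succ']
  have h : ∀ k : ℕ, ((k : ℝ) + 1) * ((m + 1).choose (k + 1) : ℝ)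
      = (m + 1 : ℝ) * (m.choose k : ℝ) := by
    intro k
    have h1 : (m + 1) * m.choose k = (m + 1).choose (k + 1) * (k + 1) :=
      Nat.add_one_mul_choose_eq m k
    have h2 : ((m + 1) * m.choose k : ℕ) = (((m + 1).choose (k + 1) * (k + 1) : ℕ)) := h1
    have := congrArg (Nat.cast (R := ℝ)) h2
    push_cast at this
    linarith [this]
  calc ∑ k ∈ range (m + 1), ((k + 1 : ℕ) : ℝ) * ((m + 1).choose (k + 1) : ℝ) * x ^ (k + 1)
        + (0 : ℕ) * ((m + 1).choose 0 : ℝ) * x ^ 0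
      = ∑ k ∈ range (m + 1), (m + 1 : ℝ) * x * ((m.choose k : ℝ) * x ^ k) := by
        rw [Nat.cast_zero, zero_mul, zero_mul, add_zero]
        refine Finset.sum_congr rfl fun k _ => ?_
        push_cast
        rw [h k]
        ring
    _ = (m + 1 : ℝ) * x * (1 + x) ^ m := by
        rw [← Finset.mul_sum, sum_choose_pow]

/-- Key inequality: the truncated binomial sum `∑_{i≤n} (i-1) C(2n,i) x^i` is negative
for `0 < x` with `(2n-1)x ≤ 1`. -/
lemma key_choose_neg (n : ℕ) (hn : 1 ≤ n) (x : ℝ) (hx0 : 0 < x)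
    (hx1 : (2 * n - 1 : ℝ) * x ≤ 1) :
    ∑ i ∈ range (n + 1), ((i : ℝ) - 1) * ((2 * n).choose i : ℝ) * x ^ i < 0 := by
  set m : ℕ := 2 * n - 1 with hm
  have h2n : 2 * n = m + 1 := by omega
  have hmcast : ((m : ℝ)) = 2 * (n : ℝ) - 1 := by
    rw [hm]; push_cast [Nat.cast_sub (by omega : 1 ≤ 2 * n)]; ring
  -- full sum
  have hfull : ∑ i ∈ range (2 * n + 1), ((i : ℝ) - 1) * ((2 * n).choose i : ℝ) * x ^ i
      = (1 + x) ^ m * ((m : ℝ) * x - 1) := by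
    have e1 : ∑ i ∈ range (2 * n + 1), ((i : ℝ) - 1) * ((2 * n).choose i : ℝ) * x ^ i
        = (∑ i ∈ range (m + 1 + 1), (i : ℝ) * ((m + 1).choose i : ℝ) * x ^ i)
          - ∑ i ∈ range (m + 1 + 1), ((m + 1).choose i : ℝ) * x ^ i := by
      rw [← Finset.sum_sub_distrib, h2n]
      exact Finset.sum_congr rfl fun i _ => by ring
    rw [e1, sum_mul_choose_pow, sum_choose_pow]
    have : (1 + x) ^ (m + 1) = (1 + x) ^ m * (1 + x) := pow_succ _ _
    rw [this]; push_cast; ring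
  -- tail sum positive
  have htail : 0 < ∑ i ∈ Finset.Ico (n + 1) (2 * n + 1),
      ((i : ℝ) - 1) * ((2 * n).choose i : ℝ) * x ^ i := by
    apply Finset.sum_pos'
    · intro i hi
      rw [Finset.mem_Ico] at hi
      have h1 : (1 : ℝ) ≤ (i : ℝ) - 1 := by
        have : (2 : ℕ) ≤ i := by omega
        have := Nat.cast_le (α := ℝ).2 this
        push_cast at this ⊢; linarith
      positivity
    · refine ⟨n + 1, Finset.mem_Ico.2 ⟨le_refl _, by omega⟩, ?_⟩
      have h1 : (1 : ℝ) ≤ ((n : ℝ) + 1) - 1 := by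
        have : (1 : ℝ) ≤ (n : ℝ) := by exact_mod_cast hn
        linarith
      have h2 : (0 : ℝ) < ((2 * n).choose (n + 1) : ℝ) := by
        have : 0 < (2 * n).choose (n + 1) := Nat.choose_pos (by omega)
        exact_mod_cast this
      push_cast
      positivity
  -- split
  have hsplit : ∑ i ∈ range (n + 1), ((i : ℝ) - 1) * ((2 * n).choose i : ℝ) * x ^ i
      + ∑ i ∈ Finset.Ico (n + 1) (2 * n + 1),
        ((i : ℝ) - 1) * ((2 * n).choose i : ℝ) * x ^ i
      = ∑ i ∈ range (2 * n + 1), ((i : ℝ) - 1) * ((2 * n).choose i : ℝ) * x ^ i := by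
    rw [Finset.range_eq_Ico, Finset.range_eq_Ico]
    exact Finset.sum_Ico_consecutive (fun i : ℕ => ((i : ℝ) - 1) * ((2 * n).choose i : ℝ) * x ^ i) (by omega : 0 ≤ n + 1) (by omega : n + 1 ≤ 2 * n + 1)
  have hfull_le : ∑ i ∈ range (2 * n + 1), ((i : ℝ) - 1) * ((2 * n).choose i : ℝ) * x ^ i ≤ 0 := by
    rw [hfull]
    have h1 : (0 : ℝ) ≤ (1 + x) ^ m := by positivity
    have h2 : (m : ℝ) * x - 1 ≤ 0 := by rw [hmcast]; linarith
    exact mul_nonpos_of_nonneg_of_nonpos h1 h2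
  linarith


/-- Termwise comparison: `∑ i W_i x^i < ∑ W_i x^i`. -/
lemma key_W_ineq (n : ℕ) (hn : 1 ≤ n) (W : ℕ → ℕ) (hW0 : W 0 = 1)
    (hW : ∀ i, 1 ≤ i → i ≤ n → W i ≤ (2 * n).choose i) (x : ℝ) (hx0 : 0 < x)
    (hx1 : (2 * n - 1 : ℝ) * x ≤ 1)
    (hkey : ∑ i ∈ range (n + 1), ((i : ℝ) - 1) * ((2 * n).choose i : ℝ) * x ^ i < 0) :
    ∑ i ∈ range (n + 1), (i : ℝ) * (W i : ℝ) * x ^ i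
      < ∑ i ∈ range (n + 1), (W i : ℝ) * x ^ i := by
  have hle : ∑ i ∈ range (n + 1), ((i : ℝ) - 1) * (W i : ℝ) * x ^ i
      ≤ ∑ i ∈ range (n + 1), ((i : ℝ) - 1) * ((2 * n).choose i : ℝ) * x ^ i := by
    apply Finset.sum_le_sum
    intro i hi
    rw [Finset.mem_range] at hi
    rcases Nat.eq_zero_or_pos i with h0 | h1
    · subst h0; simp [hW0]
    · have hiW : (W i : ℝ) ≤ ((2 * n).choose i : ℝ) := by
        exact_mod_cast hW i h1 (by omega)
      have hc : (0 : ℝ) ≤ (i : ℝ) - 1 := by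
        have : (1 : ℝ) ≤ (i : ℝ) := by exact_mod_cast h1
        linarith
      have hxp : (0 : ℝ) ≤ x ^ i := by positivity
      exact mul_le_mul_of_nonneg_right (mul_le_mul_of_nonneg_left hiW hc) hxp
  have : ∑ i ∈ range (n + 1), ((i : ℝ) - 1) * (W i : ℝ) * x ^ i < 0 := lt_of_le_of_lt hle hkey
  have heq : ∑ i ∈ range (n + 1), ((i : ℝ) - 1) * (W i : ℝ) * x ^ i
      = ∑ i ∈ range (n + 1), (i : ℝ) * (W i : ℝ) * x ^ i
        - ∑ i ∈ range (n + 1), (W i : ℝ) * x ^ i := by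
    rw [← Finset.sum_sub_distrib]
    exact Finset.sum_congr rfl fun i _ => by ring
  linarith [heq ▸ this]

lemma quot_strictMono (n : ℕ) (hn : 1 ≤ n) (W B : ℕ → ℕ) (hW0 : W 0 = 1)
    (hW : ∀ i, 1 ≤ i → i ≤ n → W i ≤ (2 * n).choose i)
    (hB0 : B 0 = 0) (hB : ∃ i, 1 ≤ i ∧ i ≤ n ∧ 1 ≤ B i)
    (keyW : ∀ x : ℝ, 0 < x → (2 * n - 1 : ℝ) * x ≤ 1 →
      ∑ i ∈ range (n + 1), (i : ℝ) * (W i : ℝ) * x ^ i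
        < ∑ i ∈ range (n + 1), (W i : ℝ) * x ^ i) :
    StrictMonoOn (fun x => (∑ i ∈ range (n + 1), (B i : ℝ) * x ^ i)
      / (∑ i ∈ range (n + 1), (W i : ℝ) * x ^ i))
      (Set.Ioc 0 (1 / (2 * n - 1 : ℝ))) := by
  set Fn : ℝ → ℝ := fun x => ∑ i ∈ range (n + 1), (W i : ℝ) * x ^ i with hFn
  set Gn : ℝ → ℝ := fun x => ∑ i ∈ range (n + 1), (B i : ℝ) * x ^ i with hGn
  set FD : ℝ → ℝ := fun x => ∑ i ∈ range (n + 1), (W i : ℝ) * ((i : ℝ) * x ^ (i - 1)) with hFD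
  set GD : ℝ → ℝ := fun x => ∑ i ∈ range (n + 1), (B i : ℝ) * ((i : ℝ) * x ^ (i - 1)) with hGD
  have h2n1 : (0 : ℝ) < 2 * (n : ℝ) - 1 := by
    have : (1 : ℝ) ≤ (n : ℝ) := by exact_mod_cast hn
    linarith
  have hFpos : ∀ x : ℝ, 0 ≤ x → 1 ≤ Fn x := by
    intro x hx
    have h0 : (1 : ℝ) = (W 0 : ℝ) * x ^ 0 := by simp [hW0]
    rw [h0, hFn]
    exact Finset.single_le_sum (f := fun i => (W i : ℝ) * x ^ i)
      (fun i _ => by positivity) (Finset.mem_range.2 (by omega))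
  have hFderiv : ∀ x : ℝ, HasDerivAt Fn (FD x) x := by
    intro x
    exact HasDerivAt.fun_sum fun i _ => (hasDerivAt_pow i x).const_mul ((W i : ℝ))
  have hGderiv : ∀ x : ℝ, HasDerivAt Gn (GD x) x := by
    intro x
    exact HasDerivAt.fun_sum fun i _ => (hasDerivAt_pow i x).const_mul ((B i : ℝ))
  have hFcont : Continuous Fn := by
    apply continuous_finset_sum
    intro i _
    exact continuous_const.mul (continuous_pow i)
  have hGcont : Continuous Gn := by
    apply continuous_finset_sum
    intro i _
    exact continuous_const.mul (continuous_pow i)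
  apply strictMonoOn_of_deriv_pos (convex_Ioc _ _)
  · apply ContinuousOn.div hGcont.continuousOn hFcont.continuousOn
    intro x hx
    have := hFpos x (le_of_lt hx.1)
    linarith
  · intro x hx
    rw [interior_Ioc] at hx
    obtain ⟨hx0, hxlt⟩ := hx
    have hFne : Fn x ≠ 0 := by have := hFpos x hx0.le; linarith
    have hd : HasDerivAt (fun y => Gn y / Fn y)
        ((GD x * Fn x - Gn x * FD x) / Fn x ^ 2) x :=
      (hGderiv x).div (hFderiv x) hFne
    rw [hd.deriv]
    have hx1 : (2 * (n : ℝ) - 1) * x ≤ 1 := by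
      have := (lt_div_iff₀ h2n1).1 hxlt
      nlinarith
    have hkeyx : x * FD x < Fn x := by
      have hxFD : x * FD x = ∑ i ∈ range (n + 1), (i : ℝ) * (W i : ℝ) * x ^ i := by
        rw [hFD, Finset.mul_sum]
        refine Finset.sum_congr rfl fun i _ => ?_
        rcases Nat.eq_zero_or_pos i with h0 | h1
        · subst h0; simp
        · have hi : i - 1 + 1 = i := by omega
          calc x * ((W i : ℝ) * ((i : ℝ) * x ^ (i - 1)))
              = (i : ℝ) * (W i : ℝ) * (x ^ (i - 1) * x) := by ring
            _ = (i : ℝ) * (W i : ℝ) * x ^ i := by rw [← pow_succ, hi]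
      rw [hxFD]
      exact keyW x hx0 hx1
    have hnum : 0 < GD x * Fn x - Gn x * FD x := by
      have heq : GD x * Fn x - Gn x * FD x
          = ∑ i ∈ range (n + 1),
            (B i : ℝ) * ((i : ℝ) * x ^ (i - 1) * Fn x - x ^ i * FD x) := by
        rw [hGD, hGn, Finset.sum_mul, Finset.sum_mul, ← Finset.sum_sub_distrib]
        exact Finset.sum_congr rfl fun i _ => by ring
      rw [heq]
      have hterm : ∀ i : ℕ, 1 ≤ i → i ≤ n →
          0 < (i : ℝ) * x ^ (i - 1) * Fn x - x ^ i * FD x := by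
        intro i h1 h2
        have hi : i - 1 + 1 = i := by omega
        have hxi : x ^ i = x ^ (i - 1) * x := by rw [← pow_succ, hi]
        have hic : (1 : ℝ) ≤ (i : ℝ) := by exact_mod_cast h1
        have hFx := hFpos x hx0.le
        have hxp : (0 : ℝ) < x ^ (i - 1) := by positivity
        calc (0 : ℝ) < x ^ (i - 1) * ((i : ℝ) * Fn x - x * FD x) := by
              apply mul_pos hxp
              nlinarith
          _ = (i : ℝ) * x ^ (i - 1) * Fn x - x ^ i * FD x := by rw [hxi]; ring
      apply Finset.sum_pos'
      · intro i hi
        rcases Nat.eq_zero_or_pos i with h0 | h1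
        · subst h0; simp [hB0]
        · rw [Finset.mem_range] at hi
          have := hterm i h1 (by omega)
          positivity
      · obtain ⟨i, hi1, hi2, hiB⟩ := hB
        refine ⟨i, Finset.mem_range.2 (by omega), ?_⟩
        have h1 : (1 : ℝ) ≤ (B i : ℝ) := by exact_mod_cast hiB
        have := hterm i hi1 hi2
        nlinarith
    positivity

lemma term_eq (c a b : ℝ) (i k : ℕ) (hb : b ≠ 0) :
    c * a ^ i * b ^ k = b ^ k * b ^ i * (c * (a / b) ^ i) := by
  rw [div_pow]
  have hbi : b ^ i ≠ 0 := pow_ne_zero _ hb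
  field_simp

end CrossingAux

open Finset CrossingAux in
/-- The ratio `g p / f p` of the nontrivial-class and trivial-class
weight-enumerator probability polynomials is strictly increasing on `(0, 1/n]`;
consequently for each `v > 0` there is at most one crossing point
`p ∈ (0, 1/n]` with `g p = v * f p`. -/
theorem crossing_point_unique (n : ℕ) (hn : 1 ≤ n) (W B : ℕ → ℕ)
    (hW0 : W 0 = 1) (hW : ∀ i, 1 ≤ i → i ≤ n → W i ≤ (2 * n).choose i)
    (hB0 : B 0 = 0) (hB : ∃ i, 1 ≤ i ∧ i ≤ n ∧ 1 ≤ B i) :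
    let f : ℝ → ℝ := fun p => ∑ i ∈ Finset.range (n + 1),
      (W i : ℝ) * (p / 2) ^ i * (1 - p / 2) ^ (2 * n - i)
    let g : ℝ → ℝ := fun p => ∑ i ∈ Finset.range (n + 1),
      (B i : ℝ) * (p / 2) ^ i * (1 - p / 2) ^ (2 * n - i)
    StrictMonoOn (fun p => g p / f p) (Set.Ioc 0 (1 / (n : ℝ))) ∧
      ∀ v : ℝ, 0 < v →
        ∀ p₁ ∈ Set.Ioc (0 : ℝ) (1 / (n : ℝ)), ∀ p₂ ∈ Set.Ioc (0 : ℝ) (1 / (n : ℝ)),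
          g p₁ = v * f p₁ → g p₂ = v * f p₂ → p₁ = p₂ := by
  intro f g
  have hn1 : (1 : ℝ) ≤ (n : ℝ) := by exact_mod_cast hn
  -- basic facts about p in the interval
  have hp2 : ∀ p : ℝ, p ∈ Set.Ioc 0 (1 / (n : ℝ)) → 0 < p ∧ p < 2 := by
    intro p hp
    refine ⟨hp.1, ?_⟩
    have h1 : (1 : ℝ) / (n : ℝ) ≤ 1 := by
      rw [div_le_one (by linarith)]; linarith
    have := hp.2
    linarith
  -- the substitution map
  have hphi_mem : ∀ p : ℝ, p ∈ Set.Ioc 0 (1 / (n : ℝ)) →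
      p / (2 - p) ∈ Set.Ioc 0 (1 / (2 * (n : ℝ) - 1)) := by
    intro p hp
    obtain ⟨hp0, hplt⟩ := hp2 p hp
    have h2p : (0 : ℝ) < 2 - p := by linarith
    have h2n1 : (0 : ℝ) < 2 * (n : ℝ) - 1 := by linarith
    constructor
    · positivity
    · rw [div_le_div_iff₀ h2p h2n1]
      have hpn : p * (n : ℝ) ≤ 1 := by
        have := hp.2
        rw [le_div_iff₀ (by linarith)] at this
        linarith
      nlinarith
  -- monotonicity of the substitution
  have hphi_mono : ∀ p₁ ∈ Set.Ioc (0 : ℝ) (1 / (n : ℝ)), ∀ p₂ ∈ Set.Ioc (0 : ℝ) (1 / (n : ℝ)),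
      p₁ < p₂ → p₁ / (2 - p₁) < p₂ / (2 - p₂) := by
    intro p₁ hp₁ p₂ hp₂ h
    obtain ⟨h10, h12⟩ := hp2 p₁ hp₁
    obtain ⟨h20, h22⟩ := hp2 p₂ hp₂
    rw [div_lt_div_iff₀ (by linarith) (by linarith)]
    nlinarith
  -- rewrite f and g via the substitution
  have key : ∀ (C : ℕ → ℕ), ∀ p ∈ Set.Ioc (0 : ℝ) (1 / (n : ℝ)),
      (∑ i ∈ range (n + 1), (C i : ℝ) * (p / 2) ^ i * (1 - p / 2) ^ (2 * n - i))
        = (1 - p / 2) ^ (2 * n) * ∑ i ∈ range (n + 1), (C i : ℝ) * (p / (2 - p)) ^ i := by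
    intro C p hp
    obtain ⟨hp0, hplt⟩ := hp2 p hp
    have hq : (0 : ℝ) < 1 - p / 2 := by linarith
    rw [Finset.mul_sum]
    refine Finset.sum_congr rfl fun i hi => ?_
    rw [Finset.mem_range] at hi
    have e1 : p / (2 - p) = (p / 2) / (1 - p / 2) := by
      rw [div_eq_div_iff (by linarith) (by linarith)]; ring
    rw [e1]
    have e2 : (1 - p / 2) ^ (2 * n) = (1 - p / 2) ^ (2 * n - i) * (1 - p / 2) ^ i := by
      rw [← pow_add]; congr 1; omega
    rw [e2]
    exact term_eq _ _ _ i (2 * n - i) hq.ne'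
  -- positivity of f on the interval
  have hFpos : ∀ x : ℝ, 0 ≤ x → 1 ≤ ∑ i ∈ range (n + 1), (W i : ℝ) * x ^ i := by
    intro x hx
    have h0 : (1 : ℝ) = (W 0 : ℝ) * x ^ 0 := by simp [hW0]
    rw [h0]
    exact Finset.single_le_sum (f := fun i => (W i : ℝ) * x ^ i)
      (fun i _ => by positivity) (Finset.mem_range.2 (by omega))
  have hfpos : ∀ p ∈ Set.Ioc (0 : ℝ) (1 / (n : ℝ)), 0 < f p := by
    intro p hp
    obtain ⟨hp0, hplt⟩ := hp2 p hp
    have hq : (0 : ℝ) < 1 - p / 2 := by linarith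
    have hx : p / (2 - p) ∈ Set.Ioc 0 (1 / (2 * (n : ℝ) - 1)) := hphi_mem p hp
    have h1 := hFpos (p / (2 - p)) hx.1.le
    have : f p = (1 - p / 2) ^ (2 * n)
        * ∑ i ∈ range (n + 1), (W i : ℝ) * (p / (2 - p)) ^ i := key W p hp
    rw [this]
    have hq2 : (0 : ℝ) < (1 - p / 2) ^ (2 * n) := by positivity
    nlinarith
  -- the key W inequality, packaged
  have keyW : ∀ x : ℝ, 0 < x → (2 * (n : ℝ) - 1) * x ≤ 1 →
      ∑ i ∈ range (n + 1), (i : ℝ) * (W i : ℝ) * x ^ i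
        < ∑ i ∈ range (n + 1), (W i : ℝ) * x ^ i := fun x hx0 hx1 =>
    key_W_ineq n hn W hW0 hW x hx0 hx1 (key_choose_neg n hn x hx0 hx1)
  -- strict monotonicity of the quotient on the x-side
  have hmonoX := quot_strictMono n hn W B hW0 hW hB0 hB keyW
  -- strict monotonicity of p ↦ g p / f p
  have hmono : StrictMonoOn (fun p => g p / f p) (Set.Ioc 0 (1 / (n : ℝ))) := by
    intro p₁ hp₁ p₂ hp₂ hlt
    have hr : ∀ p ∈ Set.Ioc (0 : ℝ) (1 / (n : ℝ)),
        g p / f p = (∑ i ∈ range (n + 1), (B i : ℝ) * (p / (2 - p)) ^ i)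
          / (∑ i ∈ range (n + 1), (W i : ℝ) * (p / (2 - p)) ^ i) := by
      intro p hp
      obtain ⟨hp0, hplt⟩ := hp2 p hp
      have hq : (0 : ℝ) < 1 - p / 2 := by linarith
      have hqne : ((1 - p / 2) ^ (2 * n) : ℝ) ≠ 0 := by positivity
      show (∑ i ∈ range (n + 1), (B i : ℝ) * (p / 2) ^ i * (1 - p / 2) ^ (2 * n - i))
          / (∑ i ∈ range (n + 1), (W i : ℝ) * (p / 2) ^ i * (1 - p / 2) ^ (2 * n - i)) = _
      rw [key B p hp, key W p hp, mul_div_mul_left _ _ hqne]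
    show g p₁ / f p₁ < g p₂ / f p₂
    rw [hr p₁ hp₁, hr p₂ hp₂]
    exact hmonoX (hphi_mem p₁ hp₁) (hphi_mem p₂ hp₂) (hphi_mono p₁ hp₁ p₂ hp₂ hlt)
  refine ⟨hmono, ?_⟩
  intro v hv p₁ hp₁ p₂ hp₂ h₁ h₂
  have hval : ∀ p ∈ Set.Ioc (0 : ℝ) (1 / (n : ℝ)), g p = v * f p → g p / f p = v := by
    intro p hp h
    rw [h, mul_div_assoc, div_self (hfpos p hp).ne', mul_one]
  exact hmono.injOn hp₁ hp₂ (by rw [hval p₁ hp₁ h₁, hval p₂ hp₂ h₂])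
end

section
/- Let m be a natural number, let S ⊆ N be finite sets of vectors in Fin m → ZMod 2 with 0 ∈ S, and let x₀ ∈ Fin m → ZMod 2 satisfy wt(x₀) ≤ wt(x₀ + y) for all y ∈ N. Then for every real t with 0 < t ≤ 1, ∑_{y ∈ S} t^{wt(x₀ + y)} ≥ (1/|N|) · ∑_{y ∈ N} t^{wt(x₀ + y)}, where wt denotes the Hamming weight and |N| is the cardinality of N. -/
/-- If `S ⊆ N` are finite sets of binary vectors with `0 ∈ S` and `x₀` is a
minimum-weight element of its coset `x₀ + N`, then for `0 < t ≤ 1` the class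
containing `x₀` carries at least a `1/|N|` fraction of the total probability:
`∑_{y ∈ S} t^{wt(x₀+y)} ≥ (1/|N|) * ∑_{y ∈ N} t^{wt(x₀+y)}`. -/
theorem min_weight_class_prob_lower_bound (m : ℕ)
    (S N : Finset (Fin m → ZMod 2)) (hSN : S ⊆ N) (h0 : (0 : Fin m → ZMod 2) ∈ S)
    (x₀ : Fin m → ZMod 2)
    (hmin : ∀ y ∈ N, hammingNorm x₀ ≤ hammingNorm (x₀ + y))
    (t : ℝ) (ht0 : 0 < t) (ht1 : t ≤ 1) :
    (1 / (N.card : ℝ)) * ∑ y ∈ N, t ^ hammingNorm (x₀ + y)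
      ≤ ∑ y ∈ S, t ^ hammingNorm (x₀ + y) := by
  have hNpos : 0 < (N.card : ℝ) := by
    exact_mod_cast Finset.card_pos.mpr ⟨0, hSN h0⟩
  have h1 : ∑ y ∈ N, t ^ hammingNorm (x₀ + y) ≤ N.card * t ^ hammingNorm x₀ := by
    calc ∑ y ∈ N, t ^ hammingNorm (x₀ + y) ≤ ∑ _y ∈ N, t ^ hammingNorm x₀ := by
          apply Finset.sum_le_sum
          intro y hy
          exact pow_le_pow_of_le_one ht0.le ht1 (hmin y hy)
      _ = N.card * t ^ hammingNorm x₀ := by rw [Finset.sum_const, nsmul_eq_mul]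
  have h2 : t ^ hammingNorm x₀ ≤ ∑ y ∈ S, t ^ hammingNorm (x₀ + y) := by
    have := Finset.single_le_sum (f := fun y => t ^ hammingNorm (x₀ + y))
      (fun y _ => le_of_lt (pow_pos ht0 _)) h0
    simpa using this
  calc (1 / (N.card : ℝ)) * ∑ y ∈ N, t ^ hammingNorm (x₀ + y)
      ≤ (1 / (N.card : ℝ)) * (N.card * t ^ hammingNorm x₀) := by
        apply mul_le_mul_of_nonneg_left h1 (by positivity)
    _ = t ^ hammingNorm x₀ := by field_simp
    _ ≤ _ := h2
end

section
/- Let n ≥ 1 and 0 ≤ k ≤ n − 1 be natural numbers, set N = 2n − k − 1, and let g, h : Fin n → (Fin n → ZMod 2) satisfy ∑_{l} (h i l) · (g j l) = 1 if i = j and 0 otherwise, for all i, j. Let pad : (Fin n → ZMod 2) → (Fin N → ZMod 2) extend a vector by zeros, and for n ≤ r < N let e_r : Fin N → ZMod 2 be the standard basis vector with a 1 in coordinate r. Define, with 0-based indices, the vectors in the product space (Fin N → ZMod 2) × (Fin N → ZMod 2): A_i = (pad(g i), 0) for 0 ≤ i < k; B_j = (pad(g (k+j)) + e_{n+j}, 0)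 and C_j = (0, pad(h (k+j)) + e_{n+j}) for 0 ≤ j < n − k − 1. Then any two (not necessarily distinct) vectors among the A_i, B_j, C_j have symplectic product ω equal to 0, where ω((z,x),(z',x')) = ∑_l z_l·x'_l + ∑_l x_l·z'_l ∈ ZMod 2. -/
/-- Pad a vector in `Fin n → ZMod 2` with zeros to a vector in `Fin N → ZMod 2`. -/
def padV (n N : ℕ) (v : Fin n → ZMod 2) : Fin N → ZMod 2 :=
  fun r => if h : (r : ℕ) < n then v ⟨r, h⟩ else 0

/-- Standard basis vector of `Fin N → ZMod 2` with a `1` in coordinate `r`. -/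
def eV (N : ℕ) (r : ℕ) : Fin N → ZMod 2 := fun l => if (l : ℕ) = r then 1 else 0

/-- Symplectic product of two Pauli operators in binary representation. -/
def sympl (N : ℕ) (u v : (Fin N → ZMod 2) × (Fin N → ZMod 2)) : ZMod 2 :=
  (∑ l, u.1 l * v.2 l) + (∑ l, u.2 l * v.1 l)

/-- The symplectic representatives of the stabilizer generators
`S_i = Z^{g_i}` (for `i < k`), `S_{k+j} = Z^{g_{k+j}} ⊗ Z_{n+j}` and
`S_{n-1+j} = X^{h_{k+j}} ⊗ X_{n+j}` (for `j < n - k - 1`) of the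
`[[2n-k-1, 1]]` code built from a classical code with generator rows `g`. -/
def gens (n k : ℕ) (hn : 1 ≤ n) (hk : k ≤ n - 1) (g h : Fin n → Fin n → ZMod 2) :
    Fin k ⊕ Fin (n - k - 1) ⊕ Fin (n - k - 1) →
      (Fin (2 * n - k - 1) → ZMod 2) × (Fin (2 * n - k - 1) → ZMod 2)
  | Sum.inl i => (padV n (2 * n - k - 1) (g ⟨i.1, by have := i.2; omega⟩), 0)
  | Sum.inr (Sum.inl j) =>
      (padV n (2 * n - k - 1) (g ⟨k + j.1, by have := j.2; omega⟩)
        + eV (2 * n - k - 1) (n + j.1), 0)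
  | Sum.inr (Sum.inr j) =>
      (0, padV n (2 * n - k - 1) (h ⟨k + j.1, by have := j.2; omega⟩)
        + eV (2 * n - k - 1) (n + j.1))

lemma sum_pad_pad (n N : ℕ) (hN : n ≤ N) (v w : Fin n → ZMod 2) :
    ∑ l, padV n N v l * padV n N w l = ∑ l, v l * w l := by
  rw [← Finset.sum_subset (Finset.subset_univ
      ((Finset.univ : Finset (Fin n)).map (Fin.castLEEmb hN)))]
  · rw [Finset.sum_map]
    refine Finset.sum_congr rfl fun l _ => ?_
    simp [padV, Fin.castLEEmb, l.2]
  · intro x _ hx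
    have hxn : ¬ (x : ℕ) < n := by
      intro hlt
      exact hx (Finset.mem_map.mpr ⟨⟨x, hlt⟩, Finset.mem_univ _, rfl⟩)
    simp [padV, hxn]

lemma sum_pad_e (n N r : ℕ) (hr : n ≤ r) (v : Fin n → ZMod 2) :
    ∑ l : Fin N, padV n N v l * eV N r l = 0 := by
  refine Finset.sum_eq_zero fun l _ => ?_
  by_cases hl : (l : ℕ) < n
  · have : (l : ℕ) ≠ r := by omega
    simp [eV, this]
  · simp [padV, hl]

lemma sum_e_pad (n N r : ℕ) (hr : n ≤ r) (v : Fin n → ZMod 2) :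
    ∑ l : Fin N, eV N r l * padV n N v l = 0 := by
  refine Finset.sum_eq_zero fun l _ => ?_
  by_cases hl : (l : ℕ) < n
  · have : (l : ℕ) ≠ r := by omega
    simp [eV, this]
  · simp [padV, hl]

lemma sum_e_e (N r s : ℕ) (hr : r < N) :
    ∑ l : Fin N, eV N r l * eV N s l = if r = s then 1 else 0 := by
  rw [Finset.sum_eq_single (⟨r, hr⟩ : Fin N)]
  · simp only [eV, if_pos rfl]
    by_cases h : r = s <;> simp [h]
  · intro b _ hb
    have : (b : ℕ) ≠ r := fun h => hb (Fin.ext h)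
    simp [eV, this]
  · simp

/-- The stabilizer generators of the `[[2n-k-1, 1]]` code constructed from dual
bases `g`, `h` of `𝔽₂ⁿ` mutually commute: any two of them have vanishing
symplectic product. -/
theorem gens_mutually_commute (n k : ℕ) (hn : 1 ≤ n) (hk : k ≤ n - 1)
    (g h : Fin n → Fin n → ZMod 2)
    (hdual : ∀ i j, (∑ l, h i l * g j l) = if i = j then 1 else 0) :
    ∀ a b : Fin k ⊕ Fin (n - k - 1) ⊕ Fin (n - k - 1),
      sympl (2 * n - k - 1) (gens n k hn hk g h a) (gens n k hn hk g h b) = 0 := by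
  have hN : n ≤ 2 * n - k - 1 := by omega
  have hgdual : ∀ i j : Fin n, (∑ l, g i l * h j l) = if j = i then 1 else 0 := by
    intro i j
    rw [← hdual j i]
    exact Finset.sum_congr rfl fun l _ => mul_comm _ _
  rintro (i | j | j) (i' | j' | j') <;>
    simp only [sympl, gens, Pi.zero_apply, mul_zero, zero_mul, Finset.sum_const_zero,
      add_zero, zero_add, Pi.add_apply, mul_add, add_mul, Finset.sum_add_distrib]
  · -- A vs C
    rw [sum_pad_pad n _ hN, sum_pad_e n _ _ (by omega), hgdual]
    have hne : (⟨k + j'.1, by have := j'.2; omega⟩ : Fin n) ≠ ⟨i.1, by have := i.2; omega⟩ := by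
      intro hcon
      have := Fin.mk.inj_iff.mp hcon
      have := i.2
      omega
    simp [hne]
  · -- B vs C
    rw [sum_pad_pad n _ hN, sum_pad_e n _ _ (by omega), sum_e_pad n _ _ (by omega),
      sum_e_e _ _ _ (by have := j.2; omega), hgdual]
    by_cases hjj : j = j'
    · subst hjj; simp; decide
    · have h1 : n + j.1 ≠ n + j'.1 := fun hcon => hjj (Fin.ext (by omega))
      have h2 : (⟨k + j'.1, by have := j'.2; omega⟩ : Fin n)
          ≠ ⟨k + j.1, by have := j.2; omega⟩ := by
        intro hcon
        have := Fin.mk.inj_iff.mp hcon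
        exact hjj (Fin.ext (by omega))
      simp [h1, h2]
      exact fun e => hjj (Fin.ext e)
  · -- C vs A
    rw [sum_pad_pad n _ hN, sum_e_pad n _ _ (by omega), hdual]
    have hne : (⟨k + j.1, by have := j.2; omega⟩ : Fin n) ≠ ⟨i'.1, by have := i'.2; omega⟩ := by
      intro hcon
      have := Fin.mk.inj_iff.mp hcon
      have := i'.2
      omega
    simp [hne]
  · -- C vs B
    rw [sum_pad_pad n _ hN, sum_pad_e n _ _ (by omega), sum_e_pad n _ _ (by omega),
      sum_e_e _ _ _ (by have := j.2; omega), hdual]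
    by_cases hjj : j = j'
    · subst hjj; simp; decide
    · have h1 : n + j.1 ≠ n + j'.1 := fun hcon => hjj (Fin.ext (by omega))
      have h2 : (⟨k + j.1, by have := j.2; omega⟩ : Fin n)
          ≠ ⟨k + j'.1, by have := j'.2; omega⟩ := by
        intro hcon
        have := Fin.mk.inj_iff.mp hcon
        exact hjj (Fin.ext (by omega))
      simp [h1, h2]
      exact fun e => hjj (Fin.ext e)
end

section
/- Let n ≥ 1 and 0 ≤ k ≤ n − 1 be natural numbers, set N = 2n − k − 1, and let g, h : Fin n → (Fin n → ZMod 2) satisfy ∑_{l} (h i l) · (g j l) = 1 if i = j and 0 otherwise, for all i, j. Let pad : (Fin n → ZMod 2) → (Fin N → ZMod 2) extend a vector by zeros, and for n ≤ r < N let e_r : Fin N → ZMod 2 be the standard basis vector with a 1 in coordinate r. Define, with 0-based indices, the vectors in (Fin N → ZMod 2) × (Fin N → ZMod 2): A_i = (pad(g i), 0) for 0 ≤ i < k; B_j = (pad(g (k+j)) + e_{n+j}, 0) and C_j = (0, pad(h (k+j)) + e_{n+j}) for 0 ≤ j < n − k − 1. Then the family consisting of all 2n − k − 2 vectors A_i,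 B_j, C_j is linearly independent over ZMod 2. -/
private lemma fst_finset_sum {ι : Type*} {M N : Type*} [AddCommMonoid M] [AddCommMonoid N]
    (s : Finset ι) (f : ι → M × N) : (∑ i ∈ s, f i).1 = ∑ i ∈ s, (f i).1 :=
  map_sum (AddMonoidHom.fst M N) f s

private lemma snd_finset_sum {ι : Type*} {M N : Type*} [AddCommMonoid M] [AddCommMonoid N]
    (s : Finset ι) (f : ι → M × N) : (∑ i ∈ s, f i).2 = ∑ i ∈ s, (f i).2 :=
  map_sum (AddMonoidHom.snd M N) f s

/-- The `2n - k - 2` stabilizer generators of the `[[2n-k-1, 1]]` code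
constructed from dual bases `g`, `h` of `𝔽₂ⁿ` are linearly independent
over `ZMod 2`. -/
theorem gens_linearIndependent (n k : ℕ) (hn : 1 ≤ n) (hk : k ≤ n - 1)
    (g h : Fin n → Fin n → ZMod 2)
    (hdual : ∀ i j, (∑ l, h i l * g j l) = if i = j then 1 else 0) :
    LinearIndependent (ZMod 2) (gens n k hn hk g h) := by
  rw [Fintype.linearIndependent_iff]
  intro c hc
  have hB : ∀ j : Fin (n - k - 1), c (Sum.inr (Sum.inl j)) = 0 := by
    intro j
    have hj : n + j.1 < 2 * n - k - 1 := by have := j.2; omega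
    have h1 := congrFun (congrArg Prod.fst hc) ⟨n + j.1, hj⟩
    have hlt : ¬ (n + j.1 < n) := by omega
    simp only [Fintype.sum_sum_type, gens, Prod.fst_add, fst_finset_sum, Prod.smul_fst,
      Pi.add_apply, Finset.sum_apply, Pi.smul_apply, padV, eV, Prod.fst_zero, Pi.zero_apply,
      smul_eq_mul, mul_zero, Finset.sum_const_zero, add_zero, zero_add,
      hlt, dif_neg, not_false_iff, mul_ite, mul_one, mul_add] at h1
    have hiff : ∀ x : Fin (n - k - 1), (n + j.1 = n + x.1) ↔ (j = x) := by
      intro x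
      constructor
      · intro hx; exact Fin.ext (by omega)
      · intro hx; rw [hx]
    simp only [hiff, Finset.sum_ite_eq, Finset.mem_univ, if_true] at h1
    exact h1
  have hC : ∀ j : Fin (n - k - 1), c (Sum.inr (Sum.inr j)) = 0 := by
    intro j
    have hj : n + j.1 < 2 * n - k - 1 := by have := j.2; omega
    have h1 := congrFun (congrArg Prod.snd hc) ⟨n + j.1, hj⟩
    have hlt : ¬ (n + j.1 < n) := by omega
    simp only [Fintype.sum_sum_type, gens, Prod.snd_add, snd_finset_sum, Prod.smul_snd,
      Pi.add_apply, Finset.sum_apply, Pi.smul_apply, padV, eV, Prod.snd_zero, Pi.zero_apply,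
      smul_eq_mul, mul_zero, Finset.sum_const_zero, add_zero, zero_add,
      hlt, dif_neg, not_false_iff, mul_ite, mul_one, mul_add] at h1
    have hiff : ∀ x : Fin (n - k - 1), (n + j.1 = n + x.1) ↔ (j = x) := by
      intro x
      constructor
      · intro hx; exact Fin.ext (by omega)
      · intro hx; rw [hx]
    simp only [hiff, Finset.sum_ite_eq, Finset.mem_univ, if_true] at h1
    exact h1
  have hA : ∀ i : Fin k, c (Sum.inl i) = 0 := by
    have key : ∀ l : Fin n,
        (∑ i : Fin k, c (Sum.inl i) * g ⟨i.1, by have := i.2; omega⟩ l) = 0 := by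
      intro l
      have hl : (l : ℕ) < 2 * n - k - 1 := by have := l.2; omega
      have h1 := congrFun (congrArg Prod.fst hc) ⟨l.1, hl⟩
      have hge : ∀ x : Fin (n - k - 1), ¬ ((l : ℕ) = n + x.1) := by
        intro x; have := l.2; omega
      simp only [Fintype.sum_sum_type, gens, Prod.fst_add, fst_finset_sum, Prod.smul_fst,
        Pi.add_apply, Finset.sum_apply, Pi.smul_apply, padV, eV, Prod.fst_zero, Pi.zero_apply,
        smul_eq_mul, mul_zero, Finset.sum_const_zero, add_zero, zero_add,
        l.2, dif_pos, hB, zero_mul, hge, if_false, mul_ite, mul_one, mul_add] at h1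
      exact h1
    intro i
    have h2 : (∑ l : Fin n, h ⟨i.1, by have := i.2; omega⟩ l *
        (∑ i' : Fin k, c (Sum.inl i') * g ⟨i'.1, by have := i'.2; omega⟩ l)) = 0 := by
      simp [key]
    simp only [Finset.mul_sum] at h2
    rw [Finset.sum_comm] at h2
    have h3 : ∀ i' : Fin k,
        (∑ l : Fin n, h ⟨i.1, by have := i.2; omega⟩ l *
          (c (Sum.inl i') * g ⟨i'.1, by have := i'.2; omega⟩ l)) =
        c (Sum.inl i') * (if (⟨i.1, by have := i.2; omega⟩ : Fin n)
            = ⟨i'.1, by have := i'.2; omega⟩ then 1 else 0) := by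
      intro i'
      rw [← hdual, Finset.mul_sum]
      exact Finset.sum_congr rfl fun l _ => by ring
    simp only [h3, mul_ite, mul_one, mul_zero] at h2
    have hiff : ∀ i' : Fin k, ((⟨i.1, by have := i.2; omega⟩ : Fin n)
        = ⟨i'.1, by have := i'.2; omega⟩) ↔ i = i' := by
      intro i'
      constructor
      · intro hx; exact Fin.ext (by simpa using congrArg Fin.val hx)
      · intro hx; rw [hx]
    simp only [hiff, Finset.sum_ite_eq, Finset.mem_univ, if_true] at h2
    exact h2
  intro s
  match s with
  | Sum.inl i => exact hA i
  | Sum.inr (Sum.inl j) => exact hB j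
  | Sum.inr (Sum.inr j) => exact hC j
end

section
/- Let N and m be natural numbers. On pairs (z, x) with z, x : Fin N → ZMod 2 define the symplectic product ω((z,x),(z',x')) = ∑_l z_l·x'_l + ∑_l x_l·z'_l ∈ ZMod 2, and similarly with N replaced by N+1. Let ι embed (Fin N → ZMod 2) × (Fin N → ZMod 2) into (Fin (N+1) → ZMod 2) × (Fin (N+1) → ZMod 2) by extending both components by zero in the new last coordinate, and let e : Fin (N+1) → ZMod 2 be the standard basis vector of the new last coordinate. Suppose s : Fin m → (Fin N → ZMod 2) × (Fin N → ZMod 2) is a linearly independent family with ω(s i, s j) = 0 for all i, j, and z̄, x̄ are vectors with ω(z̄, s j) = 0 and ω(x̄, s j) = 0 for all j and ω(z̄, x̄) = 1. Define s' j = ι(s j), s_new = ι(z̄) + (e, 0), z̄' = ι(z̄), and x̄' = ι(x̄) + (0, e). Then: (i) the family s'_0, …, s'_{m−1}, s_new is linearly independent and any two of these vectors have symplectic product 0; (ii) ω(z̄', s' j) = 0, ω(x̄', s' j) = 0 for all j, and ω(z̄', s_new) = 0, ω(x̄', s_new) = 0; and (iii) ω(z̄', x̄') = 1. -/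
/-- Embed an `N`-qubit Pauli (in binary representation) into `N + 1` qubits by
extending both components by zero in the new last coordinate. -/
def emb (N : ℕ) (u : (Fin N → ZMod 2) × (Fin N → ZMod 2)) :
    (Fin (N + 1) → ZMod 2) × (Fin (N + 1) → ZMod 2) :=
  (Fin.snoc u.1 0, Fin.snoc u.2 0)

/-- Standard basis vector of the new last coordinate. -/
def eLast (N : ℕ) : Fin (N + 1) → ZMod 2 := Pi.single (Fin.last N) 1

section lemmas
variable {N : ℕ}

lemma sympl_comm (u v : (Fin N → ZMod 2) × (Fin N → ZMod 2)) :
    sympl N u v = sympl N v u := by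
  unfold sympl
  rw [add_comm]
  congr 1 <;> exact Finset.sum_congr rfl fun _ _ => mul_comm _ _

lemma sympl_add_right (u v w : (Fin N → ZMod 2) × (Fin N → ZMod 2)) :
    sympl N u (v + w) = sympl N u v + sympl N u w := by
  simp [sympl, mul_add, Finset.sum_add_distrib]; ring

lemma sympl_add_left (u v w : (Fin N → ZMod 2) × (Fin N → ZMod 2)) :
    sympl N (u + v) w = sympl N u w + sympl N v w := by
  simp [sympl, add_mul, Finset.sum_add_distrib]; ring

lemma sympl_self (u : (Fin N → ZMod 2) × (Fin N → ZMod 2)) :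
    sympl N u u = 0 := by
  have h : (∑ l, u.1 l * u.2 l) = (∑ l, u.2 l * u.1 l) :=
    Finset.sum_congr rfl fun _ _ => mul_comm _ _
  simp [sympl, h, CharTwo.add_self_eq_zero]

lemma sympl_emb_emb (u v : (Fin N → ZMod 2) × (Fin N → ZMod 2)) :
    sympl (N + 1) (emb N u) (emb N v) = sympl N u v := by
  simp [sympl, emb, Fin.sum_univ_castSucc]

lemma castSucc_ne_last (i : Fin N) : Fin.castSucc i ≠ Fin.last N :=
  Fin.ne_of_lt (Fin.castSucc_lt_last i)

lemma sum_snoc_eLast (f : Fin N → ZMod 2) :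
    ∑ l, (Fin.snoc f 0 : Fin (N + 1) → ZMod 2) l * eLast N l = 0 := by
  simp [eLast, Fin.sum_univ_castSucc, Pi.single_eq_of_ne (castSucc_ne_last _)]

lemma sum_eLast_snoc (f : Fin N → ZMod 2) :
    ∑ l, eLast N l * (Fin.snoc f 0 : Fin (N + 1) → ZMod 2) l = 0 := by
  simp [eLast, Fin.sum_univ_castSucc, Pi.single_eq_of_ne (castSucc_ne_last _)]

lemma sum_eLast_eLast : ∑ l, eLast N l * eLast N l = 1 := by
  simp [eLast, Fin.sum_univ_castSucc, Pi.single_eq_of_ne (castSucc_ne_last _)]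

lemma sympl_emb_e1 (u : (Fin N → ZMod 2) × (Fin N → ZMod 2)) :
    sympl (N + 1) (emb N u) (eLast N, 0) = 0 := by
  simp [sympl, emb, sum_snoc_eLast]

lemma sympl_e1_emb (u : (Fin N → ZMod 2) × (Fin N → ZMod 2)) :
    sympl (N + 1) (eLast N, 0) (emb N u) = 0 := by
  simp [sympl, emb, sum_eLast_snoc]

lemma sympl_emb_e2 (u : (Fin N → ZMod 2) × (Fin N → ZMod 2)) :
    sympl (N + 1) (emb N u) (0, eLast N) = 0 := by
  simp [sympl, emb, sum_snoc_eLast]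

lemma sympl_e2_emb (u : (Fin N → ZMod 2) × (Fin N → ZMod 2)) :
    sympl (N + 1) (0, eLast N) (emb N u) = 0 := by
  simp [sympl, emb, sum_eLast_snoc]

lemma sympl_e1_e1 : sympl (N + 1) ((eLast N, 0) : (Fin (N+1) → ZMod 2) × (Fin (N+1) → ZMod 2))
    (eLast N, 0) = 0 := by
  simp [sympl]

lemma sympl_e2_e1 : sympl (N + 1) ((0, eLast N) : (Fin (N+1) → ZMod 2) × (Fin (N+1) → ZMod 2))
    (eLast N, 0) = 1 := by
  simp [sympl, sum_eLast_eLast]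

lemma sympl_e1_e2 : sympl (N + 1) ((eLast N, 0) : (Fin (N+1) → ZMod 2) × (Fin (N+1) → ZMod 2))
    (0, eLast N) = 1 := by
  simp [sympl, sum_eLast_eLast]

/-- `emb` as a linear map. -/
def embL (N : ℕ) : ((Fin N → ZMod 2) × (Fin N → ZMod 2)) →ₗ[ZMod 2]
    ((Fin (N + 1) → ZMod 2) × (Fin (N + 1) → ZMod 2)) where
  toFun := emb N
  map_add' u v := by
    unfold emb
    refine Prod.ext ?_ ?_ <;>
      · funext l
        refine Fin.lastCases ?_ ?_ l <;> simp
  map_smul' c u := by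
    unfold emb
    refine Prod.ext ?_ ?_ <;>
      · funext l
        refine Fin.lastCases ?_ ?_ l <;> simp

lemma embL_injective (N : ℕ) : Function.Injective (embL N) := by
  intro u v h
  have h1 := congrArg Prod.fst h
  have h2 := congrArg Prod.snd h
  simp only [embL, LinearMap.coe_mk, AddHom.coe_mk, emb] at h1 h2
  refine Prod.ext (funext fun l => ?_) (funext fun l => ?_)
  · have := congrFun h1 (Fin.castSucc l); simpa using this
  · have := congrFun h2 (Fin.castSucc l); simpa using this

/-- Evaluation of the first component at the last coordinate, as a linear map. -/
def evalLast (N : ℕ) : ((Fin (N + 1) → ZMod 2) × (Fin (N + 1) → ZMod 2)) →ₗ[ZMod 2] ZMod 2 where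
  toFun u := u.1 (Fin.last N)
  map_add' _ _ := rfl
  map_smul' _ _ := rfl

end lemmas

/-- Appending an extra qubit, adding the stabilizer generator `Z̄ ⊗ Z` and
replacing the logical pair `(Z̄, X̄)` by `(Z̄ ⊗ I, X̄ ⊗ X)` again yields a valid
stabilizer code with one logical qubit: the enlarged generator family is
linearly independent and mutually commuting, the new logical operators commute
with all generators, and they anticommute with each other. -/
theorem extended_code_valid (N m : ℕ)
    (s : Fin m → (Fin N → ZMod 2) × (Fin N → ZMod 2))
    (hli : LinearIndependent (ZMod 2) s)
    (hcomm : ∀ i j, sympl N (s i) (s j) = 0)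
    (zbar xbar : (Fin N → ZMod 2) × (Fin N → ZMod 2))
    (hz : ∀ j, sympl N zbar (s j) = 0)
    (hx : ∀ j, sympl N xbar (s j) = 0)
    (hzx : sympl N zbar xbar = 1) :
    let snew := emb N zbar + (eLast N, 0)
    let fam : Fin (m + 1) → (Fin (N + 1) → ZMod 2) × (Fin (N + 1) → ZMod 2) :=
      Fin.snoc (fun j => emb N (s j)) snew
    let zbar' := emb N zbar
    let xbar' := emb N xbar + (0, eLast N)
    (LinearIndependent (ZMod 2) fam ∧
        ∀ a b, sympl (N + 1) (fam a) (fam b) = 0) ∧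
      ((∀ j, sympl (N + 1) zbar' (emb N (s j)) = 0 ∧
          sympl (N + 1) xbar' (emb N (s j)) = 0) ∧
        sympl (N + 1) zbar' snew = 0 ∧ sympl (N + 1) xbar' snew = 0) ∧
      sympl (N + 1) zbar' xbar' = 1 := by
  intro snew fam zbar' xbar'
  -- commutation with snew for any embedded vector whose sympl with zbar is 0
  have hsnew : ∀ u : (Fin N → ZMod 2) × (Fin N → ZMod 2),
      sympl N u zbar = 0 → sympl (N + 1) (emb N u) snew = 0 := by
    intro u hu
    show sympl (N + 1) (emb N u) (emb N zbar + (eLast N, 0)) = 0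
    rw [sympl_add_right, sympl_emb_emb, sympl_emb_e1, hu, add_zero]
  have hsnew' : ∀ u : (Fin N → ZMod 2) × (Fin N → ZMod 2),
      sympl N zbar u = 0 → sympl (N + 1) snew (emb N u) = 0 := by
    intro u hu
    show sympl (N + 1) (emb N zbar + (eLast N, 0)) (emb N u) = 0
    rw [sympl_add_left, sympl_emb_emb, sympl_e1_emb, hu, add_zero]
  refine ⟨⟨?_, ?_⟩, ⟨?_, ?_, ?_⟩, ?_⟩
  · -- linear independence
    have hli' : LinearIndependent (ZMod 2) (fun j => emb N (s j)) :=
      hli.map' (embL N) (LinearMap.ker_eq_bot.mpr (embL_injective N))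
    refine linearIndependent_fin_snoc.mpr ⟨hli', fun hmem => ?_⟩
    have hsub : Submodule.span (ZMod 2) (Set.range fun j => emb N (s j)) ≤
        LinearMap.ker (evalLast N) := by
      rw [Submodule.span_le]
      rintro _ ⟨j, rfl⟩
      simp [LinearMap.mem_ker, evalLast, emb]
    have h0 : evalLast N snew = 0 := hsub hmem
    have h1 : evalLast N snew = 1 := by
      simp [evalLast, snew, emb, eLast]
    rw [h0] at h1
    exact one_ne_zero h1.symm
  · -- mutual commutation
    intro a b
    refine Fin.lastCases ?_ ?_ a <;> [skip; intro i] <;>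
      (refine Fin.lastCases ?_ ?_ b <;> [skip; intro j]) <;>
      simp only [fam, Fin.snoc_last, Fin.snoc_castSucc]
    · -- snew snew
      show sympl (N + 1) (emb N zbar + (eLast N, 0)) (emb N zbar + (eLast N, 0)) = 0
      rw [sympl_add_left, sympl_add_right, sympl_add_right, sympl_emb_emb,
        sympl_self, sympl_emb_e1, sympl_e1_emb, sympl_e1_e1]
      simp
    · exact hsnew' (s j) (hz j)
    · exact hsnew (s i) ((sympl_comm _ _).trans (hz i))
    · rw [sympl_emb_emb]; exact hcomm i j
  · -- logicals vs old generators
    intro j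
    constructor
    · rw [sympl_emb_emb]; exact hz j
    · show sympl (N + 1) (emb N xbar + (0, eLast N)) (emb N (s j)) = 0
      rw [sympl_add_left, sympl_emb_emb, sympl_e2_emb, hx j, add_zero]
  · exact hsnew zbar (sympl_self zbar)
  · -- xbar' vs snew
    show sympl (N + 1) (emb N xbar + (0, eLast N)) (emb N zbar + (eLast N, 0)) = 0
    rw [sympl_add_left, sympl_add_right, sympl_add_right, sympl_emb_emb,
      sympl_emb_e1, sympl_e2_emb, sympl_e2_e1, sympl_comm, hzx]
    decide
  · -- anticommutation
    show sympl (N + 1) (emb N zbar) (emb N xbar + (0, eLast N)) = 1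
    rw [sympl_add_right, sympl_emb_emb, sympl_emb_e2, hzx, add_zero]
end
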